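/- Range condition for the one-dimensional operator with transmission conditions: for every λ > 0 and all continuous functions g₋ : [a,0] → ℝ and g₊ : [0,b] → ℝ, there exist functions f₋ : [a,0] → ℝ and f₊ : [0,b] → ℝ, each twice continuously differentiable on its interval (one-sided derivatives at the endpoints), such that λ f₋(x) − κ f₋''(x) = g₋(x) for all x ∈ [a,0], λ f₊(x) − f₊''(x) = g₊(x) for all x ∈ [0,b], and the boundary and transmission conditions hold: f₋'(a) = 0, f₊'(b) = 0, f₊'(0) = α (f₊(0) − f₋(0)), f₋'(0) = β (f₊(0) − f₋(0)). -/

import Mathlib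

open Set

/-- One-sided first derivative on the interval `[a,b]`. -/
noncomputable def dIcc (a b : ℝ) (f : ℝ → ℝ) : ℝ → ℝ :=
  derivWithin f (Set.Icc a b)

/-- One-sided second derivative on the interval `[a,b]`. -/
noncomputable def d2Icc (a b : ℝ) (f : ℝ → ℝ) : ℝ → ℝ :=
  derivWithin (derivWithin f (Set.Icc a b)) (Set.Icc a b)

open intervalIntegral in
/-- Particular solution of `P'' = μ² P + h` on ℝ with `P c = P' c = 0`, for continuous `h`. -/
lemma solve_one_aux (μ c : ℝ) (hμ : μ ≠ 0) (h : ℝ → ℝ) (hh : Continuous h) :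
    ∃ P Q : ℝ → ℝ, (∀ x, HasDerivAt P (Q x) x) ∧
      (∀ x, HasDerivAt Q (μ^2 * P x + h x) x) ∧ P c = 0 ∧ Q c = 0 := by
  set g1 : ℝ → ℝ := fun t => Real.cosh (μ*t) * h t with hg1
  set g2 : ℝ → ℝ := fun t => Real.sinh (μ*t) * h t with hg2
  have hc1 : Continuous g1 := (Real.continuous_cosh.comp (continuous_const.mul continuous_id)).mul hh
  have hc2 : Continuous g2 := (Real.continuous_sinh.comp (continuous_const.mul continuous_id)).mul hh
  set G1 : ℝ → ℝ := fun x => ∫ t in c..x, g1 t with hG1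
  set G2 : ℝ → ℝ := fun x => ∫ t in c..x, g2 t with hG2
  have hdG1 : ∀ x, HasDerivAt G1 (g1 x) x := fun x =>
    integral_hasDerivAt_right (hc1.intervalIntegrable _ _)
      (hc1.aestronglyMeasurable.stronglyMeasurableAtFilter) hc1.continuousAt
  have hdG2 : ∀ x, HasDerivAt G2 (g2 x) x := fun x =>
    integral_hasDerivAt_right (hc2.intervalIntegrable _ _)
      (hc2.aestronglyMeasurable.stronglyMeasurableAtFilter) hc2.continuousAt
  have hsinh : ∀ x : ℝ, HasDerivAt (fun y => Real.sinh (μ*y)) (μ * Real.cosh (μ*x)) x := by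
    intro x
    have := (Real.hasDerivAt_sinh (μ*x)).comp x ((hasDerivAt_id x).const_mul μ)
    simpa [mul_comm, Function.comp_def] using this
  have hcosh : ∀ x : ℝ, HasDerivAt (fun y => Real.cosh (μ*y)) (μ * Real.sinh (μ*x)) x := by
    intro x
    have := (Real.hasDerivAt_cosh (μ*x)).comp x ((hasDerivAt_id x).const_mul μ)
    simpa [mul_comm, Function.comp_def] using this
  refine ⟨fun x => (Real.sinh (μ*x) * G1 x - Real.cosh (μ*x) * G2 x) / μ,
    fun x => Real.cosh (μ*x) * G1 x - Real.sinh (μ*x) * G2 x, ?_, ?_, ?_, ?_⟩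
  · intro x
    have := (((hsinh x).mul (hdG1 x)).sub ((hcosh x).mul (hdG2 x))).div_const μ
    refine this.congr_deriv (Eq.symm ?_)
    field_simp [hg1, hg2]
    ring
  · intro x
    have := ((hcosh x).mul (hdG1 x)).sub ((hsinh x).mul (hdG2 x))
    refine this.congr_deriv (Eq.symm ?_)
    simp only [hg1, hg2]
    have hid := Real.cosh_sq_sub_sinh_sq (μ*x)
    field_simp
    linear_combination (-(h x)) * hid
  · simp [hG1, hG2]
  · simp [hG1, hG2]

lemma contDiff_two_of (f f' f'' : ℝ → ℝ) (h1 : ∀ x, HasDerivAt f (f' x) x)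
    (h2 : ∀ x, HasDerivAt f' (f'' x) x) (hc : Continuous f'') : ContDiff ℝ 2 f := by
  have hd1 : deriv f = f' := funext fun x => (h1 x).deriv
  have hd2 : deriv f' = f'' := funext fun x => (h2 x).deriv
  rw [show (2 : WithTop ℕ∞) = 1 + 1 by norm_num, contDiff_succ_iff_deriv]
  refine ⟨fun x => (h1 x).differentiableAt, by simp, ?_⟩
  rw [hd1, contDiff_one_iff_deriv, hd2]
  exact ⟨fun x => (h2 x).differentiableAt, hc⟩

lemma dIcc_eq' {lo hi : ℝ} (h : lo < hi) {f f' : ℝ → ℝ}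
    (hf : ∀ x, HasDerivAt f (f' x) x) {x : ℝ} (hx : x ∈ Icc lo hi) :
    derivWithin f (Icc lo hi) x = f' x :=
  ((hf x).hasDerivWithinAt).derivWithin ((uniqueDiffOn_Icc h) x hx)

lemma d2Icc_eq' {lo hi : ℝ} (h : lo < hi) {f f' f'' : ℝ → ℝ}
    (h1 : ∀ x, HasDerivAt f (f' x) x) (h2 : ∀ x, HasDerivAt f' (f'' x) x)
    {x : ℝ} (hx : x ∈ Icc lo hi) :
    derivWithin (derivWithin f (Icc lo hi)) (Icc lo hi) x = f'' x := by
  have e : EqOn (derivWithin f (Icc lo hi)) f' (Icc lo hi) := fun y hy =>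
    ((h1 y).hasDerivWithinAt).derivWithin (uniqueDiffOn_Icc h y hy)
  rw [derivWithin_congr e (e hx)]
  exact ((h2 x).hasDerivWithinAt).derivWithin (uniqueDiffOn_Icc h x hx)

lemma hasDerivAt_cosh_lin (μ c x : ℝ) :
    HasDerivAt (fun y => Real.cosh (μ*(y - c))) (μ * Real.sinh (μ*(x - c))) x := by
  have := (Real.hasDerivAt_cosh (μ*(x - c))).comp x (((hasDerivAt_id x).sub_const c).const_mul μ)
  simpa [mul_comm, Function.comp_def] using this

lemma hasDerivAt_sinh_lin (μ c x : ℝ) :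
    HasDerivAt (fun y => Real.sinh (μ*(y - c))) (μ * Real.cosh (μ*(x - c))) x := by
  have := (Real.hasDerivAt_sinh (μ*(x - c))).comp x (((hasDerivAt_id x).sub_const c).const_mul μ)
  simpa [mul_comm, Function.comp_def] using this

lemma cramer_two (e f g h u v : ℝ) (hD : e*h - f*g ≠ 0) :
    e*((u*h - f*v)/(e*h - f*g)) + f*((e*v - g*u)/(e*h - f*g)) = u ∧
    g*((u*h - f*v)/(e*h - f*g)) + h*((e*v - g*u)/(e*h - f*g)) = v := by
  constructor <;> (rw [mul_div_assoc', mul_div_assoc', ← add_div, div_eq_iff hD]; ring)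

lemma exists_ext {lo hi : ℝ} (h : lo ≤ hi) {g : ℝ → ℝ} (hg : ContinuousOn g (Icc lo hi)) :
    ∃ G : ℝ → ℝ, Continuous G ∧ EqOn G g (Icc lo hi) := by
  refine ⟨fun x => g (max lo (min x hi)), hg.comp_continuous
    (continuous_const.max (continuous_id.min continuous_const))
    (fun x => ⟨le_max_left _ _, max_le h (min_le_right x hi)⟩),
    fun x hx => by simp [min_eq_left hx.2, max_eq_right hx.1]⟩

/-- Range condition for the one-dimensional operator with transmission conditions. -/
theorem range_condition_transmission_1D
    (a b κ α β lam : ℝ) (ha : a < 0) (hb : 0 < b) (hκ : 0 < κ)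
    (hα : 0 ≤ α) (hβ : 0 ≤ β) (hlam : 0 < lam)
    (gm gp : ℝ → ℝ)
    (hgm : ContinuousOn gm (Icc a 0)) (hgp : ContinuousOn gp (Icc 0 b)) :
    ∃ fm fp : ℝ → ℝ,
      ContDiffOn ℝ 2 fm (Icc a 0) ∧ ContDiffOn ℝ 2 fp (Icc 0 b) ∧
      (∀ x ∈ Icc a 0, lam * fm x - κ * d2Icc a 0 fm x = gm x) ∧
      (∀ x ∈ Icc 0 b, lam * fp x - d2Icc 0 b fp x = gp x) ∧
      dIcc a 0 fm a = 0 ∧ dIcc 0 b fp b = 0 ∧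
      dIcc 0 b fp 0 = α * (fp 0 - fm 0) ∧
      dIcc a 0 fm 0 = β * (fp 0 - fm 0) := by
  obtain ⟨Gm, hGmc, hGme⟩ := exists_ext ha.le hgm
  obtain ⟨Gp, hGpc, hGpe⟩ := exists_ext hb.le hgp
  obtain ⟨μ, hμpos, hμ2⟩ : ∃ t : ℝ, 0 < t ∧ t^2 = lam/κ :=
    ⟨Real.sqrt (lam/κ), Real.sqrt_pos.mpr (div_pos hlam hκ), Real.sq_sqrt (div_pos hlam hκ).le⟩
  obtain ⟨ν, hνpos, hν2⟩ : ∃ t : ℝ, 0 < t ∧ t^2 = lam :=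
    ⟨Real.sqrt lam, Real.sqrt_pos.mpr hlam, Real.sq_sqrt hlam.le⟩
  obtain ⟨hmf, hmc, hmspec⟩ : ∃ h : ℝ → ℝ, Continuous h ∧ ∀ x, κ * h x = -Gm x :=
    ⟨fun x => -Gm x / κ, (hGmc.neg).div_const κ, fun x => by field_simp⟩
  obtain ⟨hpf, hpc, hpspec⟩ : ∃ h : ℝ → ℝ, Continuous h ∧ ∀ x, h x = -Gp x :=
    ⟨fun x => -Gp x, hGpc.neg, fun x => rfl⟩
  obtain ⟨Pm, Qm, hPm, hQm, hPm0, hQm0⟩ := solve_one_aux μ a hμpos.ne' hmf hmc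
  obtain ⟨Pp, Qp, hPp, hQp, hPp0, hQp0⟩ := solve_one_aux ν b hνpos.ne' hpf hpc
  have hPmc : Continuous Pm := (Differentiable.continuous fun x => (hPm x).differentiableAt)
  have hPpc : Continuous Pp := (Differentiable.continuous fun x => (hPp x).differentiableAt)
  obtain ⟨C1, hC1⟩ : ∃ t : ℝ, t = Real.cosh (μ*(0 - a)) := ⟨_, rfl⟩
  obtain ⟨S1, hS1⟩ : ∃ t : ℝ, t = Real.sinh (μ*(0 - a)) := ⟨_, rfl⟩
  obtain ⟨C2, hC2⟩ : ∃ t : ℝ, t = Real.cosh (ν*(0 - b)) := ⟨_, rfl⟩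
  obtain ⟨S2, hS2⟩ : ∃ t : ℝ, t = Real.sinh (ν*(0 - b)) := ⟨_, rfl⟩
  have hS1pos : 0 < S1 := by rw [hS1]; exact Real.sinh_pos_iff.mpr (by nlinarith)
  have hS2neg : S2 < 0 := by rw [hS2]; exact Real.sinh_neg_iff.mpr (by nlinarith)
  have hC1pos : 0 < C1 := by rw [hC1]; exact Real.cosh_pos _
  have hC2pos : 0 < C2 := by rw [hC2]; exact Real.cosh_pos _
  obtain ⟨p, hpd⟩ : ∃ t : ℝ, t = Pm 0 := ⟨_, rfl⟩
  obtain ⟨q, hqd⟩ : ∃ t : ℝ, t = Qm 0 := ⟨_, rfl⟩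
  obtain ⟨r, hrd⟩ : ∃ t : ℝ, t = Pp 0 := ⟨_, rfl⟩
  obtain ⟨s, hsd⟩ : ∃ t : ℝ, t = Qp 0 := ⟨_, rfl⟩
  have hDpos : 0 < α*C1*(-(β*C2)) - (ν*S2 - α*C2)*(μ*S1 + β*C1) := by
    have hS2' : 0 < -S2 := by linarith
    have h1 : 0 < μ*ν*S1*(-S2) := by positivity
    have h2 : 0 ≤ β*ν*(-S2)*C1 := by positivity
    have h3 : 0 ≤ α*μ*S1*C2 := by positivity
    nlinarith [h1, h2, h3]
  obtain ⟨A, B, heq1, heq2⟩ : ∃ A B : ℝ,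
      B*(ν*S2) + s = α*((B*C2 + r) - (A*C1 + p)) ∧
      A*(μ*S1) + q = β*((B*C2 + r) - (A*C1 + p)) := by
    obtain ⟨h1, h2⟩ := cramer_two (α*C1) (ν*S2 - α*C2) (μ*S1 + β*C1) (-(β*C2))
      (α*(r-p) - s) (β*(r-p) - q) hDpos.ne'
    refine ⟨((α*(r-p) - s)*(-(β*C2)) - (ν*S2 - α*C2)*(β*(r-p) - q)) /
        (α*C1*(-(β*C2)) - (ν*S2 - α*C2)*(μ*S1 + β*C1)),
      (α*C1*(β*(r-p) - q) - (μ*S1 + β*C1)*(α*(r-p) - s)) /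
        (α*C1*(-(β*C2)) - (ν*S2 - α*C2)*(μ*S1 + β*C1)), ?_, ?_⟩
    · linear_combination h1
    · linear_combination h2
  obtain ⟨fm, hfm⟩ : ∃ f : ℝ → ℝ, f = fun x => A * Real.cosh (μ*(x - a)) + Pm x := ⟨_, rfl⟩
  obtain ⟨fp, hfp⟩ : ∃ f : ℝ → ℝ, f = fun x => B * Real.cosh (ν*(x - b)) + Pp x := ⟨_, rfl⟩
  obtain ⟨fm', hfm'⟩ : ∃ f : ℝ → ℝ, f = fun x => A * (μ * Real.sinh (μ*(x - a))) + Qm x := ⟨_, rfl⟩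
  obtain ⟨fp', hfp'⟩ : ∃ f : ℝ → ℝ, f = fun x => B * (ν * Real.sinh (ν*(x - b))) + Qp x := ⟨_, rfl⟩
  obtain ⟨fm'', hfm''⟩ : ∃ f : ℝ → ℝ,
    f = fun x => A * (μ * (μ * Real.cosh (μ*(x - a)))) + (μ^2 * Pm x + hmf x) := ⟨_, rfl⟩
  obtain ⟨fp'', hfp''⟩ : ∃ f : ℝ → ℝ,
    f = fun x => B * (ν * (ν * Real.cosh (ν*(x - b)))) + (ν^2 * Pp x + hpf x) := ⟨_, rfl⟩
  have hdfm : ∀ x, HasDerivAt fm (fm' x) x := by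
    rw [hfm, hfm']; exact fun x => ((hasDerivAt_cosh_lin μ a x).const_mul A).add (hPm x)
  have hdfp : ∀ x, HasDerivAt fp (fp' x) x := by
    rw [hfp, hfp']; exact fun x => ((hasDerivAt_cosh_lin ν b x).const_mul B).add (hPp x)
  have hdfm' : ∀ x, HasDerivAt fm' (fm'' x) x := by
    rw [hfm', hfm'']
    exact fun x => (((hasDerivAt_sinh_lin μ a x).const_mul μ).const_mul A).add (hQm x)
  have hdfp' : ∀ x, HasDerivAt fp' (fp'' x) x := by
    rw [hfp', hfp'']
    exact fun x => (((hasDerivAt_sinh_lin ν b x).const_mul ν).const_mul B).add (hQp x)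
  have hcoshm : Continuous fun x : ℝ => Real.cosh (μ*(x - a)) :=
    Real.continuous_cosh.comp (continuous_const.mul (continuous_id.sub continuous_const))
  have hcoshp : Continuous fun x : ℝ => Real.cosh (ν*(x - b)) :=
    Real.continuous_cosh.comp (continuous_const.mul (continuous_id.sub continuous_const))
  have hfmcont : Continuous fm'' := by
    rw [hfm'']
    exact (continuous_const.mul (continuous_const.mul (continuous_const.mul hcoshm))).add
      ((continuous_const.mul hPmc).add hmc)
  have hfpcont : Continuous fp'' := by
    rw [hfp'']
    exact (continuous_const.mul (continuous_const.mul (continuous_const.mul hcoshp))).add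
      ((continuous_const.mul hPpc).add hpc)
  refine ⟨fm, fp, (contDiff_two_of fm fm' fm'' hdfm hdfm' hfmcont).contDiffOn,
    (contDiff_two_of fp fp' fp'' hdfp hdfp' hfpcont).contDiffOn, ?_, ?_, ?_, ?_, ?_, ?_⟩
  · intro x hx
    rw [show d2Icc a 0 fm x = fm'' x from d2Icc_eq' ha hdfm hdfm' hx]
    have e1 : κ * hmf x = -gm x := by rw [hmspec x, hGme hx]
    have e2 : κ * μ^2 = lam := by rw [hμ2]; field_simp
    simp only [hfm'', hfm]
    linear_combination (-(A * Real.cosh (μ*(x - a)) + Pm x)) * e2 - e1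
  · intro x hx
    rw [show d2Icc 0 b fp x = fp'' x from d2Icc_eq' hb hdfp hdfp' hx]
    have e1 : hpf x = -gp x := by rw [hpspec x, hGpe hx]
    simp only [hfp'', hfp]
    linear_combination (-(B * Real.cosh (ν*(x - b)) + Pp x)) * hν2 - e1
  · rw [show dIcc a 0 fm a = fm' a from dIcc_eq' ha hdfm (left_mem_Icc.mpr ha.le)]
    simp [hfm', hQm0]
  · rw [show dIcc 0 b fp b = fp' b from dIcc_eq' hb hdfp (right_mem_Icc.mpr hb.le)]
    simp [hfp', hQp0]
  · rw [show dIcc 0 b fp 0 = fp' 0 from dIcc_eq' hb hdfp (left_mem_Icc.mpr hb.le)]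
    simp only [hfp', hfp, hfm]
    rw [← hS2, ← hC2, ← hC1, ← hsd, ← hrd, ← hpd]
    linear_combination heq1
  · rw [show dIcc a 0 fm 0 = fm' 0 from dIcc_eq' ha hdfm (right_mem_Icc.mpr ha.le)]
    simp only [hfm', hfp, hfm]
    rw [← hS1, ← hC2, ← hC1, ← hqd, ← hrd, ← hpd]
    linear_combination heq2
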